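/- Let p ≥ 2 be real and let g, r, s > 0 be reals. Define φ(f) = g·f − r·f² − s·f^p for f ≥ 0, and let z = min{ g/(2r), (g/(ps))^{1/(p-1)} }. Then any maximizer f* of φ over [0, ∞) satisfies z/2 ≤ f* ≤ z. -/

import Mathlib

/-- Scalar self-loop problem, location of the maximizer: for `φ(f) = g f − r f² − s f^p`
on `[0, ∞)` and `z = min{g/(2r), (g/(ps))^{1/(p-1)}}`, any maximizer `f*` of `φ`
over `[0, ∞)` satisfies `z/2 ≤ f* ≤ z`. -/
theorem self_loop_maximizer_location (p : ℝ) (hp : 2 ≤ p)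
    (g r s : ℝ) (hg : 0 < g) (hr : 0 < r) (hs : 0 < s)
    (z : ℝ) (hz : z = min (g / (2 * r)) ((g / (p * s)) ^ (1 / (p - 1))))
    (fstar : ℝ) (hfstar : 0 ≤ fstar)
    (hmax : ∀ f : ℝ, 0 ≤ f →
      g * f - r * f ^ 2 - s * f ^ p ≤ g * fstar - r * fstar ^ 2 - s * fstar ^ p) :
    z / 2 ≤ fstar ∧ fstar ≤ z := by
  set φ : ℝ → ℝ := fun f => g * f - r * f ^ 2 - s * f ^ p with hφ
  have hp1 : (1:ℝ) ≤ p - 1 := by linarith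
  have hp1pos : (0:ℝ) < p - 1 := by linarith
  have hppos : (0:ℝ) < p := by linarith
  have hw : (0:ℝ) < g / (p * s) := by positivity
  -- derivative
  have hderiv : ∀ x : ℝ, HasDerivAt φ (g - 2 * r * x - s * (p * x ^ (p - 1))) x := by
    intro x
    have h1 : HasDerivAt (fun f : ℝ => g * f) g x := by
      simpa using (hasDerivAt_id x).const_mul g
    have h2 : HasDerivAt (fun f : ℝ => r * f ^ 2) (2 * r * x) x := by
      have := (hasDerivAt_pow 2 x).const_mul r
      simpa [mul_comm, mul_assoc, mul_left_comm] using this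
    have h3 : HasDerivAt (fun f : ℝ => s * f ^ p) (s * (p * x ^ (p - 1))) x :=
      (Real.hasDerivAt_rpow_const (Or.inr (by linarith))).const_mul s
    exact (h1.sub h2).sub h3
  have hcont : Continuous φ := by
    rw [continuous_iff_continuousAt]
    exact fun x => (hderiv x).continuousAt
  have hzg : z ≤ g / (2 * r) := hz ▸ min_le_left _ _
  have hzw : z ≤ (g / (p * s)) ^ (1 / (p - 1)) := hz ▸ min_le_right _ _
  have hzpos : 0 < z := by
    rw [hz]
    exact lt_min (by positivity) (Real.rpow_pos_of_pos hw _)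
  have h2rz : 2 * r * z ≤ g := by
    rw [le_div_iff₀ (by positivity : (0:ℝ) < 2 * r)] at hzg
    linarith
  have hwpow : ((g / (p * s)) ^ (1 / (p - 1))) ^ (p - 1) = g / (p * s) := by
    rw [← Real.rpow_mul hw.le, one_div, inv_mul_cancel₀ (ne_of_gt hp1pos), Real.rpow_one]
  have hzp : z ^ (p - 1) ≤ g / (p * s) := by
    calc z ^ (p - 1) ≤ ((g / (p * s)) ^ (1 / (p - 1))) ^ (p - 1) :=
          Real.rpow_le_rpow hzpos.le hzw hp1pos.le
      _ = g / (p * s) := hwpow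
  have hpsz : p * s * z ^ (p - 1) ≤ g := by
    have := (mul_le_mul_of_nonneg_left hzp (by positivity : (0:ℝ) ≤ p * s))
    rwa [mul_div_cancel₀ _ (by positivity : (p*s) ≠ 0)] at this
  -- strict mono on [0, z/2]
  have hmono : StrictMonoOn φ (Set.Icc 0 (z / 2)) := by
    apply strictMonoOn_of_deriv_pos (convex_Icc _ _) hcont.continuousOn
    intro x hx
    rw [interior_Icc] at hx
    rw [(hderiv x).deriv]
    have hx0 : 0 < x := hx.1
    have hx2 : x < z / 2 := hx.2
    have h1 : 2 * r * x < g / 2 := by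
      have : 2 * r * x < 2 * r * (z / 2) := by nlinarith
      nlinarith
    have hxp : x ^ (p - 1) ≤ (z / 2) ^ (p - 1) := Real.rpow_le_rpow hx0.le hx2.le hp1pos.le
    have hhalf : (z / 2) ^ (p - 1) ≤ z ^ (p - 1) / 2 := by
      rw [Real.div_rpow hzpos.le (by norm_num : (0:ℝ) ≤ 2)]
      apply div_le_div_of_nonneg_left (Real.rpow_nonneg hzpos.le _) (by norm_num)
      calc (2:ℝ) = 2 ^ (1:ℝ) := by norm_num
        _ ≤ 2 ^ (p - 1) := Real.rpow_le_rpow_of_exponent_le (by norm_num) hp1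
    have h2 : s * (p * x ^ (p - 1)) ≤ g / 2 := by
      have hkey := mul_le_mul_of_nonneg_left (hxp.trans hhalf)
        (le_of_lt (by positivity : (0:ℝ) < s * p))
      ring_nf at hkey hpsz ⊢
      linarith
    linarith
  -- strict anti on [z, ∞)
  have hanti : StrictAntiOn φ (Set.Ici z) := by
    apply strictAntiOn_of_deriv_neg (convex_Ici _) hcont.continuousOn
    intro x hx
    rw [interior_Ici] at hx
    rw [(hderiv x).deriv]
    have hx0 : 0 < x := hzpos.trans hx
    have hxp : z ^ (p - 1) < x ^ (p - 1) := Real.rpow_lt_rpow hzpos.le hx hp1pos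
    have hxpos : (0:ℝ) < x ^ (p-1) := Real.rpow_pos_of_pos hx0 _
    rcases le_total (g / (2 * r)) ((g / (p * s)) ^ (1 / (p - 1))) with hle | hle
    · have hzeq : z = g / (2 * r) := by rw [hz, min_eq_left hle]
      have : g < 2 * r * x := by
        rw [hzeq] at hx
        calc g = 2 * r * (g / (2 * r)) := by field_simp
          _ < 2 * r * x := by
              exact mul_lt_mul_of_pos_left hx (by positivity)
      have hpos : 0 < s * (p * x ^ (p - 1)) := by positivity
      linarith
    · have hzeq : z = (g / (p * s)) ^ (1 / (p - 1)) := by rw [hz, min_eq_right hle]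
      have hzpw : z ^ (p - 1) = g / (p * s) := by rw [hzeq, hwpow]
      have : g < p * s * x ^ (p - 1) := by
        have heq : p * s * z ^ (p - 1) = g := by rw [hzpw]; field_simp
        have := mul_lt_mul_of_pos_left hxp (by positivity : (0:ℝ) < p * s)
        linarith
      have hrx : 0 < 2 * r * x := by positivity
      nlinarith
  constructor
  · by_contra h
    push_neg at h
    have h1 : φ fstar < φ (z / 2) :=
      hmono ⟨hfstar, h.le⟩ ⟨by positivity, le_refl _⟩ h
    have h2 := hmax (z / 2) (by positivity)
    simp only [hφ] at h1
    linarith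
  · by_contra h
    push_neg at h
    have h1 : φ fstar < φ z := hanti (le_refl z) h.le h
    have h2 := hmax z hzpos.le
    simp only [hφ] at h1
    linarith
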